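/- Let D be a category with finite products and finite coproducts. Suppose there is a family of isomorphisms ψ_{X,Y,Z} : X×Y + X×Z ≅ X×(Y+Z), natural in X, Y, Z, and suppose that for every object X the product X×0 with the initial object is itself initial. Then D is distributive, i.e., the canonical map δ_{X,Y,Z} : X×Y + X×Z → X×(Y+Z) (induced by X×i and X×j) is invertible for all X, Y, Z. -/

import Mathlib

open CategoryTheory CategoryTheory.Limits

lemma aux_inl_isIso {D : Type*} [Category D] {A B : D} [HasBinaryCoproduct A B]
    (h : IsInitial B) : IsIso (coprod.inl : A ⟶ A ⨿ B) :=
  ⟨coprod.desc (𝟙 A) (h.to A), by exact coprod.inl_desc _ _, by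
    apply coprod.hom_ext
    · rw [reassoc_of% (coprod.inl_desc (𝟙 A) (h.to A)), Category.comp_id]
    · apply h.hom_ext⟩

lemma aux_inr_isIso {D : Type*} [Category D] {A B : D} [HasBinaryCoproduct A B]
    (h : IsInitial A) : IsIso (coprod.inr : B ⟶ A ⨿ B) :=
  ⟨coprod.desc (h.to B) (𝟙 B), by exact coprod.inr_desc _ _, by
    apply coprod.hom_ext
    · apply h.hom_ext
    · rw [reassoc_of% (coprod.inr_desc (h.to B) (𝟙 B)), Category.comp_id]⟩

theorem stmt_0 {D : Type*} [Category D] [HasFiniteProducts D] [HasFiniteCoproducts D]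
    (ψ : ∀ X Y Z : D, (X ⨯ Y) ⨿ (X ⨯ Z) ≅ X ⨯ (Y ⨿ Z))
    (nat : ∀ {X X' Y Y' Z Z' : D} (f : X ⟶ X') (g : Y ⟶ Y') (h : Z ⟶ Z'),
      coprod.map (prod.map f g) (prod.map f h) ≫ (ψ X' Y' Z').hom =
        (ψ X Y Z).hom ≫ prod.map f (coprod.map g h))
    (h0 : ∀ X : D, Nonempty (IsInitial (X ⨯ (⊥_ D)))) :
    ∀ X Y Z : D, IsIso (coprod.desc (prod.map (𝟙 X) coprod.inl)
      (prod.map (𝟙 X) coprod.inr) : (X ⨯ Y) ⨿ (X ⨯ Z) ⟶ X ⨯ (Y ⨿ Z)) := by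
  intro X Y Z
  obtain ⟨hX0⟩ := h0 X
  haveI h1 : IsIso (coprod.inl : (X ⨯ Y) ⟶ (X ⨯ Y) ⨿ (X ⨯ (⊥_ D))) := aux_inl_isIso hX0
  haveI h2 : IsIso (coprod.inr : (X ⨯ Z) ⟶ (X ⨯ (⊥_ D)) ⨿ (X ⨯ Z)) := aux_inr_isIso hX0
  haveI h3 : IsIso (coprod.inl : Y ⟶ Y ⨿ (⊥_ D)) := aux_inl_isIso initialIsInitial
  haveI h4 : IsIso (coprod.inr : Z ⟶ (⊥_ D) ⨿ Z) := aux_inr_isIso initialIsInitial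
  set δ : (X ⨯ Y) ⨿ (X ⨯ Z) ⟶ X ⨯ (Y ⨿ Z) :=
    coprod.desc (prod.map (𝟙 X) coprod.inl) (prod.map (𝟙 X) coprod.inr) with hδ
  set θ : (X ⨯ Y) ⨿ (X ⨯ Z) ⟶ (X ⨯ Y) ⨿ (X ⨯ Z) := δ ≫ (ψ X Y Z).inv with hθ
  set u : (X ⨯ Y) ⟶ (X ⨯ Y) :=
    prod.map (𝟙 X) (coprod.inl : Y ⟶ Y ⨿ (⊥_ D)) ≫ (ψ X Y (⊥_ D)).inv ≫
      inv (coprod.inl : (X ⨯ Y) ⟶ (X ⨯ Y) ⨿ (X ⨯ (⊥_ D))) with hu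
  set v : (X ⨯ Z) ⟶ (X ⨯ Z) :=
    prod.map (𝟙 X) (coprod.inr : Z ⟶ (⊥_ D) ⨿ Z) ≫ (ψ X (⊥_ D) Z).inv ≫
      inv (coprod.inr : (X ⨯ Z) ⟶ (X ⨯ (⊥_ D)) ⨿ (X ⨯ Z)) with hv
  -- naturality instances
  have natL := nat (𝟙 X) (𝟙 Y) (initial.to Z)
  have natR := nat (𝟙 X) (initial.to Y) (𝟙 Z)
  have key1 : prod.map (𝟙 X) (coprod.inl : Y ⟶ Y ⨿ Z) ≫ (ψ X Y Z).inv =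
      prod.map (𝟙 X) (coprod.inl : Y ⟶ Y ⨿ (⊥_ D)) ≫ (ψ X Y (⊥_ D)).inv ≫
        coprod.map (prod.map (𝟙 X) (𝟙 Y)) (prod.map (𝟙 X) (initial.to Z)) := by
    rw [Iso.comp_inv_eq]
    simp only [Category.assoc]
    rw [natL]
    simp
  have key2 : prod.map (𝟙 X) (coprod.inr : Z ⟶ Y ⨿ Z) ≫ (ψ X Y Z).inv =
      prod.map (𝟙 X) (coprod.inr : Z ⟶ (⊥_ D) ⨿ Z) ≫ (ψ X (⊥_ D) Z).inv ≫
        coprod.map (prod.map (𝟙 X) (initial.to Y)) (prod.map (𝟙 X) (𝟙 Z)) := by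
    rw [Iso.comp_inv_eq]
    simp only [Category.assoc]
    rw [natR]
    simp
  have hcomp1 : inv (coprod.inl : (X ⨯ Y) ⟶ (X ⨯ Y) ⨿ (X ⨯ (⊥_ D))) ≫
      (coprod.inl : (X ⨯ Y) ⟶ (X ⨯ Y) ⨿ (X ⨯ Z)) =
      coprod.map (prod.map (𝟙 X) (𝟙 Y)) (prod.map (𝟙 X) (initial.to Z)) := by
    rw [IsIso.inv_comp_eq]
    simp
  have hcomp2 : inv (coprod.inr : (X ⨯ Z) ⟶ (X ⨯ (⊥_ D)) ⨿ (X ⨯ Z)) ≫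
      (coprod.inr : (X ⨯ Z) ⟶ (X ⨯ Y) ⨿ (X ⨯ Z)) =
      coprod.map (prod.map (𝟙 X) (initial.to Y)) (prod.map (𝟙 X) (𝟙 Z)) := by
    rw [IsIso.inv_comp_eq]
    simp
  have eq1 : coprod.inl ≫ θ = u ≫ coprod.inl := by
    rw [hθ, hδ, hu, coprod.inl_desc_assoc, key1]
    simp only [Category.assoc, hcomp1]
  have eq2 : coprod.inr ≫ θ = v ≫ coprod.inr := by
    rw [hθ, hδ, hv, coprod.inr_desc_assoc, key2]
    simp only [Category.assoc, hcomp2]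
  have hθmap : θ = coprod.map u v := by
    apply coprod.hom_ext
    · rw [coprod.inl_map, eq1]
    · rw [coprod.inr_map, eq2]
  haveI : IsIso θ := by rw [hθmap]; infer_instance
  have hfin : δ = θ ≫ (ψ X Y Z).hom := by
    rw [hθ, Category.assoc, Iso.inv_hom_id, Category.comp_id]
  rw [hfin, hθmap]
  infer_instance
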